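/- Let n1, n2 be positive integers, let γ > 0 and ε > 0, let c ∈ ℝ^{n1×n2}, and let d ∈ ℝ^{n1×n2} be any matrix (in the application, d = α1 ⊕ α2 − c with (α1, α2) = F_{γ,ε}(μ)). Then for every (h1, h2) ∈ ℝ^{n1} × ℝ^{n2}, there exists exactly one pair (η1, η2) ∈ ℝ^{n1} × ℝ^{n2} satisfying Σ_j max'(d_{ij}; (η1)_i + (η2)_j) + γ ε (η1)_i = γ (h1)_i for all i, and Σ_i max'(d_{ij}; (η1)_i + (η2)_j) + γ ε (η2)_j = γ (h2)_j for all j, where max'(a; b) := b if a > 0, max(0, b) if a = 0, and 0 if a < 0. -/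

import Mathlib

noncomputable section

/-- max'(a; b), the directional derivative of x ↦ max(0, x) at a in direction b. -/
def maxd (a b : ℝ) : ℝ := if 0 < a then b else if a = 0 then max 0 b else 0

/-- The linearized dual system in the unknowns (η1, η2) with data matrix d and
right-hand side (h1, h2). -/
def LinSys {n1 n2 : ℕ} (γ ε : ℝ) (d : Fin n1 → Fin n2 → ℝ)
    (h1 : Fin n1 → ℝ) (h2 : Fin n2 → ℝ) (η1 : Fin n1 → ℝ) (η2 : Fin n2 → ℝ) : Prop :=
  (∀ i, (∑ j, maxd (d i j) (η1 i + η2 j)) + γ * ε * η1 i = γ * h1 i) ∧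
  (∀ j, (∑ i, maxd (d i j) (η1 i + η2 j)) + γ * ε * η2 j = γ * h2 j)

lemma maxd_mono (a : ℝ) : Monotone (maxd a) := by
  unfold maxd; split_ifs
  · exact monotone_id
  · exact fun x y h => max_le_max le_rfl h
  · exact monotone_const

lemma maxd_mul_nonneg (a x y : ℝ) : 0 ≤ (maxd a x - maxd a y) * (x - y) := by
  rcases le_total y x with h | h
  · exact mul_nonneg (sub_nonneg.2 (maxd_mono a h)) (sub_nonneg.2 h)
  · have h1 := sub_nonpos.2 (maxd_mono a h); have h2 := sub_nonpos.2 h; nlinarith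

def psi (a b : ℝ) : ℝ := maxd a b * b / 2

lemma continuous_maxd (a : ℝ) : Continuous (maxd a) := by
  unfold maxd; split_ifs
  exacts [continuous_id, continuous_const.max continuous_id, continuous_const]

lemma continuous_psi (a : ℝ) : Continuous (psi a) :=
  ((continuous_maxd a).mul continuous_id).div_const 2

lemma psi_nonneg (a b : ℝ) : 0 ≤ psi a b := by
  unfold psi maxd
  split_ifs
  · nlinarith [mul_self_nonneg b]
  · rcases le_total b 0 with h | h
    · rw [max_eq_left h]; nlinarith
    · rw [max_eq_right h]; positivity
  · simp

lemma hasDerivAt_halfsq (b : ℝ) : HasDerivAt (fun x : ℝ => x * x / 2) b b := by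
  have h := ((hasDerivAt_id b).mul (hasDerivAt_id b)).div_const 2
  have : (1 * id b + id b * 1) / 2 = b := by simp
  rw [this] at h
  exact h.congr_of_eventuallyEq (by filter_upwards with x; simp)

lemma hasDerivAt_psi (a b : ℝ) : HasDerivAt (fun x => psi a x) (maxd a b) b := by
  rcases lt_trichotomy 0 a with ha | ha | ha
  · simp only [psi, maxd, if_pos ha]
    exact hasDerivAt_halfsq b
  · simp only [psi, maxd, if_neg (by linarith : ¬ 0 < a), if_pos ha.symm]
    rcases lt_trichotomy b 0 with hb | hb | hb
    · have heq : (fun x : ℝ => max 0 x * x / 2) =ᶠ[nhds b] fun _ => (0:ℝ) := by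
        filter_upwards [eventually_lt_nhds hb] with x hx
        rw [max_eq_left hx.le]; ring
      rw [max_eq_left hb.le]
      exact (hasDerivAt_const b 0).congr_of_eventuallyEq heq
    · subst hb
      rw [max_self]
      rw [hasDerivAt_iff_tendsto_slope]
      have heq : (fun x : ℝ => max 0 x / 2) =ᶠ[nhdsWithin 0 {(0:ℝ)}ᶜ] slope (fun x => max 0 x * x / 2) 0 := by
        filter_upwards [self_mem_nhdsWithin] with x hx
        have hx' : x ≠ 0 := hx
        rw [slope_def_field]
        field_simp
        ring
      have hc : Filter.Tendsto (fun x : ℝ => max 0 x / 2) (nhdsWithin 0 {(0:ℝ)}ᶜ) (nhds 0) := by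
        have hcont : Continuous (fun x : ℝ => max 0 x / 2) :=
          (continuous_const.max continuous_id).div_const 2
        have h0 : Filter.Tendsto (fun x : ℝ => max 0 x / 2) (nhds 0) (nhds (max 0 (0:ℝ) / 2)) :=
          hcont.tendsto 0
        simp only [max_self, zero_div] at h0
        exact h0.mono_left nhdsWithin_le_nhds
      exact hc.congr' heq
    · have heq : (fun x : ℝ => max 0 x * x / 2) =ᶠ[nhds b] fun x => x * x / 2 := by
        filter_upwards [eventually_gt_nhds hb] with x hx
        rw [max_eq_right hx.le]
      rw [max_eq_right hb.le]
      exact (hasDerivAt_halfsq b).congr_of_eventuallyEq heq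
  · simp only [psi, maxd, if_neg (by linarith : ¬ 0 < a), if_neg (by linarith : a ≠ 0)]
    simpa using hasDerivAt_const b (0:ℝ)

def Phi {n1 n2 : ℕ} (γ ε : ℝ) (d : Fin n1 → Fin n2 → ℝ) (h1 : Fin n1 → ℝ) (h2 : Fin n2 → ℝ)
    (p : (Fin n1 → ℝ) × (Fin n2 → ℝ)) : ℝ :=
  (∑ i, ∑ j, psi (d i j) (p.1 i + p.2 j)) + γ * ε / 2 * ∑ i, (p.1 i)^2
    + γ * ε / 2 * ∑ j, (p.2 j)^2 - γ * ∑ i, h1 i * p.1 i - γ * ∑ j, h2 j * p.2 j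

lemma continuous_Phi {n1 n2 : ℕ} (γ ε : ℝ) (d : Fin n1 → Fin n2 → ℝ)
    (h1 : Fin n1 → ℝ) (h2 : Fin n2 → ℝ) : Continuous (Phi γ ε d h1 h2) := by
  unfold Phi
  refine ((((Continuous.add (Continuous.add ?_ ?_) ?_).sub ?_).sub ?_))
  · exact continuous_finset_sum _ fun i _ => continuous_finset_sum _ fun j _ =>
      (continuous_psi (d i j)).comp
        (((continuous_apply i).comp continuous_fst).add ((continuous_apply j).comp continuous_snd))
  · exact continuous_const.mul (continuous_finset_sum _ fun i _ =>
      (((continuous_apply i).comp continuous_fst).pow 2))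
  · exact continuous_const.mul (continuous_finset_sum _ fun j _ =>
      (((continuous_apply j).comp continuous_snd).pow 2))
  · exact continuous_const.mul (continuous_finset_sum _ fun i _ =>
      continuous_const.mul ((continuous_apply i).comp continuous_fst))
  · exact continuous_const.mul (continuous_finset_sum _ fun j _ =>
      continuous_const.mul ((continuous_apply j).comp continuous_snd))

lemma hasDerivAt_Phi_fst {n1 n2 : ℕ} (γ ε : ℝ) (d : Fin n1 → Fin n2 → ℝ)
    (h1 : Fin n1 → ℝ) (h2 : Fin n2 → ℝ) (u : Fin n1 → ℝ) (v : Fin n2 → ℝ) (i : Fin n1) (t : ℝ) :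
    HasDerivAt (fun s => Phi γ ε d h1 h2 (Function.update u i s, v))
      ((∑ j, maxd (d i j) (t + v j)) + γ * ε * t - γ * h1 i) t := by
  have hA : HasDerivAt (fun s => ∑ i', ∑ j, psi (d i' j) (Function.update u i s i' + v j))
      (∑ j, maxd (d i j) (t + v j)) t := by
    have key : ∀ i' ∈ Finset.univ, HasDerivAt
        (fun s => ∑ j, psi (d i' j) (Function.update u i s i' + v j))
        (if i' = i then ∑ j, maxd (d i j) (t + v j) else 0) t := by
      intro i' _
      by_cases hii : i' = i
      · subst hii
        simp only [Function.update_self, if_pos rfl]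
        refine HasDerivAt.fun_sum fun j _ => ?_
        have h1 := (hasDerivAt_psi (d i' j) (t + v j)).comp t ((hasDerivAt_id t).add_const (v j))
        simpa [Function.comp_def] using h1
      · simp only [Function.update_of_ne hii, if_neg hii]
        exact hasDerivAt_const t _
    have := HasDerivAt.fun_sum key
    simpa using this
  have hB : HasDerivAt (fun s => γ * ε / 2 * ∑ i', (Function.update u i s i')^2)
      (γ * ε * t) t := by
    have key : ∀ i' ∈ Finset.univ, HasDerivAt
        (fun s => (Function.update u i s i')^2) (if i' = i then 2 * t else 0) t := by
      intro i' _
      by_cases hii : i' = i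
      · subst hii
        simp only [Function.update_self, if_pos rfl]
        simpa using hasDerivAt_pow 2 t
      · simp only [Function.update_of_ne hii, if_neg hii]
        exact hasDerivAt_const t _
    have h := (HasDerivAt.fun_sum key).const_mul (γ * ε / 2)
    simp only [Finset.sum_ite_eq', Finset.mem_univ, if_pos] at h
    have : γ * ε / 2 * (2 * t) = γ * ε * t := by ring
    rwa [this] at h
  have hC : HasDerivAt (fun s => γ * ∑ i', h1 i' * Function.update u i s i') (γ * h1 i) t := by
    have key : ∀ i' ∈ Finset.univ, HasDerivAt
        (fun s => h1 i' * Function.update u i s i') (if i' = i then h1 i else 0) t := by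
      intro i' _
      by_cases hii : i' = i
      · subst hii
        simp only [Function.update_self, if_pos rfl]
        simpa using (hasDerivAt_id t).const_mul (h1 i')
      · simp only [Function.update_of_ne hii, if_neg hii]
        exact hasDerivAt_const t _
    have h := (HasDerivAt.fun_sum key).const_mul γ
    simpa [Finset.sum_ite_eq'] using h
  have htot := (((hA.add hB).add_const (γ * ε / 2 * ∑ j, (v j)^2)).sub hC).sub_const
      (γ * ∑ j, h2 j * v j)
  have hfe : (fun s => Phi γ ε d h1 h2 (Function.update u i s, v)) =
      fun s => ((((∑ i', ∑ j, psi (d i' j) (Function.update u i s i' + v j))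
        + γ * ε / 2 * ∑ i', (Function.update u i s i')^2) + γ * ε / 2 * ∑ j, (v j)^2)
        - γ * ∑ i', h1 i' * Function.update u i s i') - γ * ∑ j, h2 j * v j := by
    funext s; unfold Phi; ring
  rw [hfe]
  exact htot

lemma hasDerivAt_Phi_snd {n1 n2 : ℕ} (γ ε : ℝ) (d : Fin n1 → Fin n2 → ℝ)
    (h1 : Fin n1 → ℝ) (h2 : Fin n2 → ℝ) (u : Fin n1 → ℝ) (v : Fin n2 → ℝ) (j : Fin n2) (t : ℝ) :
    HasDerivAt (fun s => Phi γ ε d h1 h2 (u, Function.update v j s))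
      ((∑ i, maxd (d i j) (u i + t)) + γ * ε * t - γ * h2 j) t := by
  have hA : HasDerivAt (fun s => ∑ i, ∑ j', psi (d i j') (u i + Function.update v j s j'))
      (∑ i, maxd (d i j) (u i + t)) t := by
    have key : ∀ i ∈ Finset.univ, HasDerivAt
        (fun s => ∑ j', psi (d i j') (u i + Function.update v j s j'))
        (maxd (d i j) (u i + t)) t := by
      intro i _
      have key2 : ∀ j' ∈ Finset.univ, HasDerivAt
          (fun s => psi (d i j') (u i + Function.update v j s j'))
          (if j' = j then maxd (d i j) (u i + t) else 0) t := by
        intro j' _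
        by_cases hjj : j' = j
        · subst hjj
          simp only [Function.update_self, if_pos rfl]
          have h := (hasDerivAt_psi (d i j') (u i + t)).comp t ((hasDerivAt_id t).const_add (u i))
          simpa [Function.comp_def] using h
        · simp only [Function.update_of_ne hjj, if_neg hjj]
          exact hasDerivAt_const t _
      have h := HasDerivAt.fun_sum key2
      simpa [Finset.sum_ite_eq'] using h
    exact HasDerivAt.fun_sum key
  have hB : HasDerivAt (fun s => γ * ε / 2 * ∑ j', (Function.update v j s j')^2)
      (γ * ε * t) t := by
    have key : ∀ j' ∈ Finset.univ, HasDerivAt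
        (fun s => (Function.update v j s j')^2) (if j' = j then 2 * t else 0) t := by
      intro j' _
      by_cases hjj : j' = j
      · subst hjj
        simp only [Function.update_self, if_pos rfl]
        simpa using hasDerivAt_pow 2 t
      · simp only [Function.update_of_ne hjj, if_neg hjj]
        exact hasDerivAt_const t _
    have h := (HasDerivAt.fun_sum key).const_mul (γ * ε / 2)
    simp only [Finset.sum_ite_eq', Finset.mem_univ, if_pos] at h
    have : γ * ε / 2 * (2 * t) = γ * ε * t := by ring
    rwa [this] at h
  have hC : HasDerivAt (fun s => γ * ∑ j', h2 j' * Function.update v j s j') (γ * h2 j) t := by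
    have key : ∀ j' ∈ Finset.univ, HasDerivAt
        (fun s => h2 j' * Function.update v j s j') (if j' = j then h2 j else 0) t := by
      intro j' _
      by_cases hjj : j' = j
      · subst hjj
        simp only [Function.update_self, if_pos rfl]
        simpa using (hasDerivAt_id t).const_mul (h2 j')
      · simp only [Function.update_of_ne hjj, if_neg hjj]
        exact hasDerivAt_const t _
    have h := (HasDerivAt.fun_sum key).const_mul γ
    simpa [Finset.sum_ite_eq'] using h
  have htot := (((hA.add hB).add_const (γ * ε / 2 * ∑ i, (u i)^2)).sub_const
      (γ * ∑ i, h1 i * u i)).sub hC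
  have hfe : (fun s => Phi γ ε d h1 h2 (u, Function.update v j s)) =
      fun s => ((((∑ i, ∑ j', psi (d i j') (u i + Function.update v j s j'))
        + γ * ε / 2 * ∑ j', (Function.update v j s j')^2) + γ * ε / 2 * ∑ i, (u i)^2)
        - γ * ∑ i, h1 i * u i) - γ * ∑ j', h2 j' * Function.update v j s j' := by
    funext s; unfold Phi; ring
  rw [hfe]
  exact htot

lemma sq_norm_le_sum {n : ℕ} (u : Fin n → ℝ) : ‖u‖^2 ≤ ∑ i, (u i)^2 := by
  have hs : 0 ≤ ∑ i, (u i)^2 := Finset.sum_nonneg fun i _ => sq_nonneg _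
  have hle : ‖u‖ ≤ Real.sqrt (∑ i, (u i)^2) := by
    refine pi_norm_le_iff_of_nonneg (Real.sqrt_nonneg _) |>.2 fun i => ?_
    rw [Real.norm_eq_abs]
    exact Real.abs_le_sqrt (Finset.single_le_sum (fun i _ => sq_nonneg (u i)) (Finset.mem_univ i))
  calc ‖u‖^2 ≤ (Real.sqrt (∑ i, (u i)^2))^2 := by
        exact pow_le_pow_left₀ (norm_nonneg _) hle 2
    _ = ∑ i, (u i)^2 := Real.sq_sqrt hs

lemma Phi_lower {n1 n2 : ℕ} (γ ε : ℝ) (hγ : 0 < γ) (hε : 0 < ε) (d : Fin n1 → Fin n2 → ℝ)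
    (h1 : Fin n1 → ℝ) (h2 : Fin n2 → ℝ) (p : (Fin n1 → ℝ) × (Fin n2 → ℝ)) :
    γ * ε / 2 * ‖p‖^2 - γ * ((∑ i, |h1 i|) + ∑ j, |h2 j|) * ‖p‖ ≤ Phi γ ε d h1 h2 p := by
  have hpsi : 0 ≤ ∑ i, ∑ j, psi (d i j) (p.1 i + p.2 j) :=
    Finset.sum_nonneg fun i _ => Finset.sum_nonneg fun j _ => psi_nonneg _ _
  have hnorm1 : ‖p.1‖ ≤ ‖p‖ := norm_fst_le p
  have hnorm2 : ‖p.2‖ ≤ ‖p‖ := norm_snd_le p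
  have hsq : ‖p‖^2 ≤ (∑ i, (p.1 i)^2) + ∑ j, (p.2 j)^2 := by
    rcases max_cases ‖p.1‖ ‖p.2‖ with ⟨h, _⟩ | ⟨h, _⟩ <;>
      [ (have := sq_norm_le_sum p.1;
         have h2' : (0:ℝ) ≤ ∑ j, (p.2 j)^2 := Finset.sum_nonneg fun j _ => sq_nonneg _;
         rw [Prod.norm_def, h]; linarith);
        (have := sq_norm_le_sum p.2;
         have h1' : (0:ℝ) ≤ ∑ i, (p.1 i)^2 := Finset.sum_nonneg fun i _ => sq_nonneg _;
         rw [Prod.norm_def, h]; linarith)]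
  have hlin1 : |∑ i, h1 i * p.1 i| ≤ (∑ i, |h1 i|) * ‖p‖ := by
    calc |∑ i, h1 i * p.1 i| ≤ ∑ i, |h1 i * p.1 i| := Finset.abs_sum_le_sum_abs _ _
      _ ≤ ∑ i, |h1 i| * ‖p‖ := by
          refine Finset.sum_le_sum fun i _ => ?_
          rw [abs_mul]
          refine mul_le_mul_of_nonneg_left ?_ (abs_nonneg _)
          exact le_trans ((norm_le_pi_norm p.1 i)) hnorm1
      _ = (∑ i, |h1 i|) * ‖p‖ := by rw [Finset.sum_mul]
  have hlin2 : |∑ j, h2 j * p.2 j| ≤ (∑ j, |h2 j|) * ‖p‖ := by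
    calc |∑ j, h2 j * p.2 j| ≤ ∑ j, |h2 j * p.2 j| := Finset.abs_sum_le_sum_abs _ _
      _ ≤ ∑ j, |h2 j| * ‖p‖ := by
          refine Finset.sum_le_sum fun j _ => ?_
          rw [abs_mul]
          refine mul_le_mul_of_nonneg_left ?_ (abs_nonneg _)
          exact le_trans ((norm_le_pi_norm p.2 j)) hnorm2
      _ = (∑ j, |h2 j|) * ‖p‖ := by rw [Finset.sum_mul]
  have habs1 : -((∑ i, |h1 i|) * ‖p‖) ≤ ∑ i, h1 i * p.1 i := neg_le_of_abs_le hlin1 |>.trans_eq rfl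
  have habs2 : -((∑ j, |h2 j|) * ‖p‖) ≤ ∑ j, h2 j * p.2 j := neg_le_of_abs_le hlin2
  have hge : 0 < γ * ε / 2 := by positivity
  unfold Phi
  have hq := mul_le_mul_of_nonneg_left hsq hge.le
  have ha1 := mul_le_mul_of_nonneg_left (le_of_abs_le hlin1) hγ.le
  have ha2 := mul_le_mul_of_nonneg_left (le_of_abs_le hlin2) hγ.le
  have e : γ * ((∑ i, |h1 i|) + ∑ j, |h2 j|) * ‖p‖
      = γ * ((∑ i, |h1 i|) * ‖p‖) + γ * ((∑ j, |h2 j|) * ‖p‖) := by ring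
  have e2 : γ * ε / 2 * ((∑ i, (p.1 i)^2) + ∑ j, (p.2 j)^2)
      = γ * ε / 2 * (∑ i, (p.1 i)^2) + γ * ε / 2 * (∑ j, (p.2 j)^2) := by ring
  linarith

lemma tendsto_Phi {n1 n2 : ℕ} (γ ε : ℝ) (hγ : 0 < γ) (hε : 0 < ε) (d : Fin n1 → Fin n2 → ℝ)
    (h1 : Fin n1 → ℝ) (h2 : Fin n2 → ℝ) :
    Filter.Tendsto (Phi γ ε d h1 h2) (Filter.cocompact _) Filter.atTop := by
  set C : ℝ := γ * ((∑ i, |h1 i|) + ∑ j, |h2 j|) with hC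
  have hpoly : Filter.Tendsto (fun t : ℝ => γ * ε / 2 * t^2 - C * t) Filter.atTop Filter.atTop := by
    have hl : Filter.Tendsto (fun t : ℝ => γ * ε / 2 * t + -C) Filter.atTop Filter.atTop :=
      Filter.tendsto_atTop_add_const_right _ _
        (Filter.Tendsto.const_mul_atTop (by positivity) Filter.tendsto_id)
    have hm : Filter.Tendsto (fun t : ℝ => t * (γ * ε / 2 * t + -C)) Filter.atTop Filter.atTop :=
      Filter.Tendsto.atTop_mul_atTop₀ Filter.tendsto_id hl
    refine hm.congr fun t => by ring
  have hcomp := hpoly.comp (tendsto_norm_cocompact_atTop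
      (E := (Fin n1 → ℝ) × (Fin n2 → ℝ)))
  exact Filter.tendsto_atTop_mono (fun p => Phi_lower γ ε hγ hε d h1 h2 p) hcomp

lemma LinSys_unique {n1 n2 : ℕ} {γ ε : ℝ} (hγ : 0 < γ) (hε : 0 < ε)
    {d : Fin n1 → Fin n2 → ℝ} {h1 : Fin n1 → ℝ} {h2 : Fin n2 → ℝ}
    {u u' : Fin n1 → ℝ} {v v' : Fin n2 → ℝ}
    (h : LinSys γ ε d h1 h2 u v) (h' : LinSys γ ε d h1 h2 u' v') : u = u' ∧ v = v' := by
  have e1 : ∀ i, (∑ j, (maxd (d i j) (u i + v j) - maxd (d i j) (u' i + v' j)))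
      = -(γ * ε * (u i - u' i)) := by
    intro i
    have a := h.1 i; have b := h'.1 i
    rw [Finset.sum_sub_distrib]; linarith
  have e2 : ∀ j, (∑ i, (maxd (d i j) (u i + v j) - maxd (d i j) (u' i + v' j)))
      = -(γ * ε * (v j - v' j)) := by
    intro j
    have a := h.2 j; have b := h'.2 j
    rw [Finset.sum_sub_distrib]; linarith
  set Δ : Fin n1 → Fin n2 → ℝ :=
    fun i j => maxd (d i j) (u i + v j) - maxd (d i j) (u' i + v' j) with hΔ
  have key : ∑ i, ∑ j, Δ i j * ((u i - u' i) + (v j - v' j))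
      = -(γ * ε) * ((∑ i, (u i - u' i)^2) + ∑ j, (v j - v' j)^2) := by
    have split : ∑ i, ∑ j, Δ i j * ((u i - u' i) + (v j - v' j))
        = (∑ i, ∑ j, Δ i j * (u i - u' i)) + ∑ i, ∑ j, Δ i j * (v j - v' j) := by
      rw [← Finset.sum_add_distrib]
      refine Finset.sum_congr rfl fun i _ => ?_
      rw [← Finset.sum_add_distrib]
      exact Finset.sum_congr rfl fun j _ => by ring
    have t1 : (∑ i, ∑ j, Δ i j * (u i - u' i)) = -(γ * ε) * ∑ i, (u i - u' i)^2 := by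
      rw [Finset.mul_sum]
      refine Finset.sum_congr rfl fun i _ => ?_
      rw [← Finset.sum_mul, e1 i]; ring
    have t2 : (∑ i, ∑ j, Δ i j * (v j - v' j)) = -(γ * ε) * ∑ j, (v j - v' j)^2 := by
      rw [Finset.sum_comm, Finset.mul_sum]
      refine Finset.sum_congr rfl fun j _ => ?_
      rw [← Finset.sum_mul, e2 j]; ring
    rw [split, t1, t2]; ring
  have hpos : 0 ≤ ∑ i, ∑ j, Δ i j * ((u i - u' i) + (v j - v' j)) := by
    refine Finset.sum_nonneg fun i _ => Finset.sum_nonneg fun j _ => ?_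
    have h0 := maxd_mul_nonneg (d i j) (u i + v j) (u' i + v' j)
    have heq : (u i + v j) - (u' i + v' j) = (u i - u' i) + (v j - v' j) := by ring
    rw [heq] at h0
    exact h0
  have hsumA : (0:ℝ) ≤ ∑ i, (u i - u' i)^2 := Finset.sum_nonneg fun i _ => sq_nonneg _
  have hsumB : (0:ℝ) ≤ ∑ j, (v j - v' j)^2 := Finset.sum_nonneg fun j _ => sq_nonneg _
  have hγε : 0 < γ * ε := mul_pos hγ hε
  have hzero : ((∑ i, (u i - u' i)^2) + ∑ j, (v j - v' j)^2) = 0 := by nlinarith [key, hpos]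
  have hA : (∑ i, (u i - u' i)^2) = 0 := by linarith
  have hB : (∑ j, (v j - v' j)^2) = 0 := by linarith
  constructor
  · funext i
    have := (Finset.sum_eq_zero_iff_of_nonneg fun i _ => sq_nonneg (u i - u' i)).1 hA i
      (Finset.mem_univ i)
    have h0 : u i - u' i = 0 := by
      have := sq_eq_zero_iff.1 this
      exact this
    linarith
  · funext j
    have := (Finset.sum_eq_zero_iff_of_nonneg fun j _ => sq_nonneg (v j - v' j)).1 hB j
      (Finset.mem_univ j)
    have h0 : v j - v' j = 0 := sq_eq_zero_iff.1 this
    linarith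

/-- The linearized dual system has exactly one solution for any right-hand side. -/
theorem linearized_dual_system_unique_solution (n1 n2 : ℕ) (hn1 : 0 < n1) (hn2 : 0 < n2)
    (γ ε : ℝ) (hγ : 0 < γ) (hε : 0 < ε) (c : Fin n1 → Fin n2 → ℝ)
    (d : Fin n1 → Fin n2 → ℝ) (h1 : Fin n1 → ℝ) (h2 : Fin n2 → ℝ) :
    ∃! η : (Fin n1 → ℝ) × (Fin n2 → ℝ), LinSys γ ε d h1 h2 η.1 η.2 := by
  obtain ⟨p₀, hp₀⟩ := (continuous_Phi γ ε d h1 h2).exists_forall_le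
    (tendsto_Phi γ ε hγ hε d h1 h2)
  have hsol : LinSys γ ε d h1 h2 p₀.1 p₀.2 := by
    constructor
    · intro i
      have hloc : IsLocalMin (fun s => Phi γ ε d h1 h2 (Function.update p₀.1 i s, p₀.2))
          (p₀.1 i) := by
        refine Filter.Eventually.of_forall fun s => ?_
        simpa only [Function.update_eq_self] using hp₀ (Function.update p₀.1 i s, p₀.2)
      have hzero := hloc.hasDerivAt_eq_zero
        (hasDerivAt_Phi_fst γ ε d h1 h2 p₀.1 p₀.2 i (p₀.1 i))
      linarith [hzero]
    · intro j
      have hloc : IsLocalMin (fun s => Phi γ ε d h1 h2 (p₀.1, Function.update p₀.2 j s))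
          (p₀.2 j) := by
        refine Filter.Eventually.of_forall fun s => ?_
        simpa only [Function.update_eq_self] using hp₀ (p₀.1, Function.update p₀.2 j s)
      have hzero := hloc.hasDerivAt_eq_zero
        (hasDerivAt_Phi_snd γ ε d h1 h2 p₀.1 p₀.2 j (p₀.2 j))
      linarith [hzero]
  refine ⟨p₀, hsol, ?_⟩
  rintro ⟨u, v⟩ hy
  obtain ⟨hu, hv⟩ := LinSys_unique hγ hε hy hsol
  exact Prod.ext hu hv
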